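/- Let k > 0, b ≥ 0, assume the moments m₂ := ∫₀^∞ τ²f(τ)dτ and m₃ := ∫₀^∞ τ³f(τ)dτ are finite, and set φ₁(γ) := ∫₀^∞ f(τ)e^{−γτ}dτ, φ₂(γ) := ∫₀^∞ f(τ)e^{−2γτ}dτ, CV² := (m₂ − m₁²)/m₁². Define the steady-state mean x̄(γ) := k/γ − (k/(2γ²m₁))·(1−φ₁)/(1−φ₁/2) and second moment x̄²(γ) := (bk/(2γ²m₁))·((1−φ₂)/(1−φ₂/4))·((1−φ₁)/(1−φ₁/2)) + k²/γ² + (k²/(16γ³m₁))·(−14 + 17φ₁ + φ₂(2−5φ₁))/((1−φ₂/4)(1−φ₁/2)). Then lim_{γ→0⁺} (x̄²(γ) − x̄(γ)²)/x̄(γ)² = 1/27 + 4·(9·m₃/m₁³ − 9 − 6·CV² − 7·CV⁴)/(27·(3+CV²)²) + (16b/(3(3+CV²)))·(2/(k·m₁·(3+CV²))). (Equation (50): noise decomposition for a stable gene product into cell-cycle-time and partitioning contributions.) -/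

import Mathlib

open MeasureTheory Filter Topology

private lemma nonneg_of_deriv {F F' : ℝ → ℝ}
    (hd : ∀ y : ℝ, HasDerivAt F (F' y) y)
    (hF' : ∀ y : ℝ, 0 ≤ y → 0 ≤ F' y) (hF0 : F 0 = 0) :
    ∀ x : ℝ, 0 ≤ x → 0 ≤ F x := by
  intro x hx
  have hdiff : Differentiable ℝ F := fun y => (hd y).differentiableAt
  have hmono : MonotoneOn F (Set.Ici (0:ℝ)) := by
    apply monotoneOn_of_deriv_nonneg (convex_Ici 0) hdiff.continuous.continuousOn
      (fun y _ => (hdiff y).differentiableWithinAt)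
    intro y hy
    rw [(hd y).deriv]
    exact hF' y (le_of_lt (by simpa using hy))
  have := hmono Set.self_mem_Ici hx hx
  rwa [hF0] at this

private lemma hasDerivAt_expneg (y : ℝ) :
    HasDerivAt (fun t : ℝ => Real.exp (-t)) (-Real.exp (-y)) y := by
  simpa [Function.comp_def] using (Real.hasDerivAt_exp (-y)).comp y (hasDerivAt_neg y)

private lemma exp_neg_le_quad {x : ℝ} (hx : 0 ≤ x) : Real.exp (-x) ≤ 1 - x + x^2/2 := by
  have h := nonneg_of_deriv (F := fun t => 1 - t + t^2/2 - Real.exp (-t))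
    (F' := fun t => -1 + t + Real.exp (-t))
    (fun y => by
      have := ((hasDerivAt_id y).const_sub 1 |>.add ((hasDerivAt_pow 2 y).div_const 2)).sub
        (hasDerivAt_expneg y)
      exact this.congr_deriv (by norm_num))
    (fun y hy => by show (0:ℝ) ≤ -1 + y + Real.exp (-y); nlinarith [Real.add_one_le_exp (-y)])
    (by norm_num)
  nlinarith [h x hx]

private lemma cubic_le_exp_neg {x : ℝ} (hx : 0 ≤ x) :
    1 - x + x^2/2 - x^3/6 ≤ Real.exp (-x) := by
  have h := nonneg_of_deriv (F := fun t => Real.exp (-t) - (1 - t + t^2/2 - t^3/6))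
    (F' := fun t => -Real.exp (-t) + (1 - t + t^2/2))
    (fun y => by
      have := (hasDerivAt_expneg y).sub
        ((((hasDerivAt_id y).const_sub 1 |>.add ((hasDerivAt_pow 2 y).div_const 2)).sub
          ((hasDerivAt_pow 3 y).div_const 6)))
      exact this.congr_deriv (by norm_num; ring))
    (fun y hy => by show (0:ℝ) ≤ -Real.exp (-y) + (1 - y + y^2/2); nlinarith [exp_neg_le_quad hy])
    (by norm_num)
  nlinarith [h x hx]

private lemma exp_neg_le_quart {x : ℝ} (hx : 0 ≤ x) :
    Real.exp (-x) ≤ 1 - x + x^2/2 - x^3/6 + x^4/24 := by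
  have h := nonneg_of_deriv
    (F := fun t => 1 - t + t^2/2 - t^3/6 + t^4/24 - Real.exp (-t))
    (F' := fun t => Real.exp (-t) - (1 - t + t^2/2 - t^3/6))
    (fun y => by
      have := (((((hasDerivAt_id y).const_sub 1 |>.add ((hasDerivAt_pow 2 y).div_const 2)).sub
        ((hasDerivAt_pow 3 y).div_const 6)).add ((hasDerivAt_pow 4 y).div_const 24)).sub
        (hasDerivAt_expneg y))
      exact this.congr_deriv (by norm_num; ring))
    (fun y hy => by show (0:ℝ) ≤ Real.exp (-y) - (1 - y + y^2/2 - y^3/6); nlinarith [cubic_le_exp_neg hy])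
    (by norm_num)
  nlinarith [h x hx]

private lemma tendsto_rem (f : ℝ → ℝ) (hf_cont : Continuous f)
    (hf_pos : ∀ τ : ℝ, 0 < τ → 0 < f τ)
    (hf_prob : ∫ τ in Set.Ioi (0:ℝ), f τ = 1)
    (m₁ : ℝ) (hm₁ : m₁ = ∫ τ in Set.Ioi (0:ℝ), τ * f τ)
    (hm₁_int : IntegrableOn (fun τ : ℝ => τ * f τ) (Set.Ioi 0))
    (m₂ : ℝ) (hm₂ : m₂ = ∫ τ in Set.Ioi (0:ℝ), τ ^ 2 * f τ)
    (hm₂_int : IntegrableOn (fun τ : ℝ => τ ^ 2 * f τ) (Set.Ioi 0))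
    (m₃ : ℝ) (hm₃ : m₃ = ∫ τ in Set.Ioi (0:ℝ), τ ^ 3 * f τ)
    (hm₃_int : IntegrableOn (fun τ : ℝ => τ ^ 3 * f τ) (Set.Ioi 0))
    (φ₁ : ℝ → ℝ) (hφ₁ : ∀ γ : ℝ, φ₁ γ = ∫ τ in Set.Ioi (0:ℝ), f τ * Real.exp (-γ * τ)) :
    Tendsto (fun γ : ℝ => (φ₁ γ - 1 + m₁*γ - m₂*γ^2/2 + m₃*γ^3/6)/γ^3)
      (nhdsWithin 0 (Set.Ioi 0)) (nhds 0) := by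
  -- integrability of f
  have hf_int : IntegrableOn f (Set.Ioi (0:ℝ)) := by
    by_contra h
    rw [integral_undef h] at hf_prob
    norm_num at hf_prob
  have hfnn : ∀ τ : ℝ, 0 < τ → 0 ≤ f τ := fun τ hτ => (hf_pos τ hτ).le
  -- integrability of f * exp
  have hexp_int : ∀ γ : ℝ, 0 < γ →
      IntegrableOn (fun τ => f τ * Real.exp (-γ * τ)) (Set.Ioi (0:ℝ)) := by
    intro γ hγ
    apply hf_int.mono' ((hf_cont.mul (by fun_prop)).aestronglyMeasurable)
    rw [ae_restrict_iff' measurableSet_Ioi]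
    refine .of_forall fun τ hτ => ?_
    rw [Set.mem_Ioi] at hτ
    rw [Real.norm_eq_abs, Pi.mul_apply, abs_of_nonneg (mul_nonneg (hfnn τ hτ) (Real.exp_pos _).le)]
    nlinarith [Real.exp_le_one_iff.2 (by nlinarith : -γ * τ ≤ 0), hfnn τ hτ,
      (Real.exp_pos (-γ * τ)).le]
  -- key representation
  have key : ∀ γ : ℝ, 0 < γ →
      (φ₁ γ - 1 + m₁*γ - m₂*γ^2/2 + m₃*γ^3/6)/γ^3
        = ∫ τ in Set.Ioi (0:ℝ),
            f τ * ((Real.exp (-γ*τ) - 1 + γ*τ - (γ*τ)^2/2 + (γ*τ)^3/6)/γ^3) := by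
    intro γ hγ
    have hA := hexp_int γ hγ
    have hC : IntegrableOn (fun τ : ℝ => γ*(τ * f τ)) (Set.Ioi 0) := hm₁_int.const_mul γ
    have hD : IntegrableOn (fun τ : ℝ => γ^2/2*(τ^2 * f τ)) (Set.Ioi 0) :=
      hm₂_int.const_mul _
    have hE : IntegrableOn (fun τ : ℝ => γ^3/6*(τ^3 * f τ)) (Set.Ioi 0) :=
      hm₃_int.const_mul _
    have comb : ∫ τ in Set.Ioi (0:ℝ),
        (f τ * Real.exp (-γ*τ) - f τ + γ*(τ*f τ) - γ^2/2*(τ^2*f τ) + γ^3/6*(τ^3*f τ))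
        = (∫ τ in Set.Ioi (0:ℝ), f τ * Real.exp (-γ*τ)) - (∫ τ in Set.Ioi (0:ℝ), f τ)
          + γ*(∫ τ in Set.Ioi (0:ℝ), τ*f τ) - γ^2/2*(∫ τ in Set.Ioi (0:ℝ), τ^2*f τ)
          + γ^3/6*(∫ τ in Set.Ioi (0:ℝ), τ^3*f τ) := by
      have e1 : ∫ τ in Set.Ioi (0:ℝ),
          (f τ * Real.exp (-γ*τ) - f τ + γ*(τ*f τ) - γ^2/2*(τ^2*f τ) + γ^3/6*(τ^3*f τ))
          = (∫ τ in Set.Ioi (0:ℝ),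
              (f τ * Real.exp (-γ*τ) - f τ + γ*(τ*f τ) - γ^2/2*(τ^2*f τ)))
            + ∫ τ in Set.Ioi (0:ℝ), γ^3/6*(τ^3*f τ) :=
        integral_add (((hA.sub hf_int).add hC).sub hD) hE
      have e2 : ∫ τ in Set.Ioi (0:ℝ),
          (f τ * Real.exp (-γ*τ) - f τ + γ*(τ*f τ) - γ^2/2*(τ^2*f τ))
          = (∫ τ in Set.Ioi (0:ℝ), (f τ * Real.exp (-γ*τ) - f τ + γ*(τ*f τ)))
            - ∫ τ in Set.Ioi (0:ℝ), γ^2/2*(τ^2*f τ) :=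
        integral_sub ((hA.sub hf_int).add hC) hD
      have e3 : ∫ τ in Set.Ioi (0:ℝ), (f τ * Real.exp (-γ*τ) - f τ + γ*(τ*f τ))
          = (∫ τ in Set.Ioi (0:ℝ), (f τ * Real.exp (-γ*τ) - f τ))
            + ∫ τ in Set.Ioi (0:ℝ), γ*(τ*f τ) :=
        integral_add (hA.sub hf_int) hC
      have e4 : ∫ τ in Set.Ioi (0:ℝ), (f τ * Real.exp (-γ*τ) - f τ)
          = (∫ τ in Set.Ioi (0:ℝ), f τ * Real.exp (-γ*τ)) - ∫ τ in Set.Ioi (0:ℝ), f τ :=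
        integral_sub hA hf_int
      rw [e1, e2, e3, e4, integral_const_mul, integral_const_mul, integral_const_mul]
    have hint_eq : ∫ τ in Set.Ioi (0:ℝ),
        f τ * ((Real.exp (-γ*τ) - 1 + γ*τ - (γ*τ)^2/2 + (γ*τ)^3/6)/γ^3)
        = (∫ τ in Set.Ioi (0:ℝ),
            (f τ * Real.exp (-γ*τ) - f τ + γ*(τ*f τ) - γ^2/2*(τ^2*f τ) + γ^3/6*(τ^3*f τ)))
          / γ^3 := by
      rw [← integral_div]
      exact integral_congr_ae (.of_forall fun τ => by ring)
    rw [hint_eq, comb, hφ₁, ← hm₁, ← hm₂, ← hm₃, hf_prob]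
    ring
  -- dominated convergence
  have hdct : Tendsto (fun γ : ℝ => ∫ τ in Set.Ioi (0:ℝ),
      f τ * ((Real.exp (-γ*τ) - 1 + γ*τ - (γ*τ)^2/2 + (γ*τ)^3/6)/γ^3))
      (nhdsWithin 0 (Set.Ioi 0)) (nhds 0) := by
    have hdct0 : Tendsto (fun γ : ℝ => ∫ τ in Set.Ioi (0:ℝ),
        f τ * ((Real.exp (-γ*τ) - 1 + γ*τ - (γ*τ)^2/2 + (γ*τ)^3/6)/γ^3))
        (nhdsWithin 0 (Set.Ioi 0)) (nhds (∫ τ in Set.Ioi (0:ℝ), (0:ℝ))) := by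
      apply tendsto_integral_filter_of_dominated_convergence
        (bound := fun τ => τ^3 * f τ / 6)
      · exact .of_forall fun γ => ((hf_cont.mul (by fun_prop)).aestronglyMeasurable)
      · filter_upwards [eventually_mem_nhdsWithin] with γ hγ
        rw [Set.mem_Ioi] at hγ
        rw [ae_restrict_iff' measurableSet_Ioi]
        refine .of_forall fun τ hτ => ?_
        rw [Set.mem_Ioi] at hτ
        have hx : 0 ≤ γ * τ := by positivity
        have hG0 : 0 ≤ Real.exp (-(γ*τ)) - 1 + γ*τ - (γ*τ)^2/2 + (γ*τ)^3/6 := by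
          nlinarith [cubic_le_exp_neg hx]
        have hG6 : Real.exp (-(γ*τ)) - 1 + γ*τ - (γ*τ)^2/2 + (γ*τ)^3/6 ≤ (γ*τ)^3/6 := by
          nlinarith [exp_neg_le_quad hx]
        rw [← neg_mul] at hG0 hG6
        rw [Real.norm_eq_abs, abs_of_nonneg (mul_nonneg (hfnn τ hτ) (by positivity))]
        have h1 : (Real.exp (-γ*τ) - 1 + γ*τ - (γ*τ)^2/2 + (γ*τ)^3/6)/γ^3 ≤ τ^3/6 := by
          rw [div_le_iff₀ (by positivity)]
          nlinarith
        calc f τ * ((Real.exp (-γ*τ) - 1 + γ*τ - (γ*τ)^2/2 + (γ*τ)^3/6)/γ^3)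
            ≤ f τ * (τ^3/6) := mul_le_mul_of_nonneg_left h1 (hfnn τ hτ)
          _ = τ^3 * f τ / 6 := by ring
      · exact hm₃_int.div_const 6
      · rw [ae_restrict_iff' measurableSet_Ioi]
        refine .of_forall fun τ hτ => ?_
        rw [Set.mem_Ioi] at hτ
        apply squeeze_zero_norm' (a := fun γ => f τ * τ^4/24 * γ)
        · filter_upwards [eventually_mem_nhdsWithin] with γ hγ
          rw [Set.mem_Ioi] at hγ
          have hx : 0 ≤ γ * τ := by positivity
          have hG0 : 0 ≤ Real.exp (-(γ*τ)) - 1 + γ*τ - (γ*τ)^2/2 + (γ*τ)^3/6 := by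
            nlinarith [cubic_le_exp_neg hx]
          have hG4 : Real.exp (-(γ*τ)) - 1 + γ*τ - (γ*τ)^2/2 + (γ*τ)^3/6 ≤ (γ*τ)^4/24 := by
            nlinarith [exp_neg_le_quart hx]
          rw [← neg_mul] at hG0 hG4
          rw [Real.norm_eq_abs, abs_of_nonneg (mul_nonneg (hfnn τ hτ) (by positivity))]
          have h1 : (Real.exp (-γ*τ) - 1 + γ*τ - (γ*τ)^2/2 + (γ*τ)^3/6)/γ^3 ≤ γ*τ^4/24 := by
            rw [div_le_iff₀ (by positivity)]
            nlinarith
          calc f τ * ((Real.exp (-γ*τ) - 1 + γ*τ - (γ*τ)^2/2 + (γ*τ)^3/6)/γ^3)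
              ≤ f τ * (γ*τ^4/24) := mul_le_mul_of_nonneg_left h1 (hfnn τ hτ)
            _ = f τ * τ^4/24 * γ := by ring
        · have hcont : Continuous (fun γ : ℝ => f τ * τ^4/24 * γ) := by continuity
          have := (hcont.tendsto 0).mono_left (nhdsWithin_le_nhds (s := Set.Ioi (0:ℝ)))
          simpa using this
    simpa using hdct0
  refine hdct.congr' ?_
  filter_upwards [eventually_mem_nhdsWithin] with γ hγ
  exact (key γ (Set.mem_Ioi.1 hγ)).symm

private lemma rat_id1 (k m1 g A : ℝ) (hg : g ≠ 0) (hm : m1 ≠ 0) (hA : 1 + g*A ≠ 0) :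
    k/g - k/(2*g^2*m1) * ((g*A)/((1+g*A)/2)) = k*((m1-A)/g + m1*A)/(m1*(1+g*A)) := by
  field_simp
  ring

private lemma rat_id2 (k b m1 g A B N : ℝ) (hg : g ≠ 0) (hm : m1 ≠ 0)
    (hA : 1 + g*A ≠ 0) (hB : 3 + g*B ≠ 0) :
    b*k/(2*g^2*m1) * ((g*B)/((3+g*B)/4)) * ((g*A)/((1+g*A)/2)) + k^2/g^2
      + k^2/(16*g^3*m1) * (N/(((3+g*B)/4) * ((1+g*A)/2)))
    = (8*b*k*(B*A) + k^2*((2*g*m1*(3+g*B)*(1+g*A) + N)/g^3))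
        / (2*m1*((3+g*B)*(1+g*A))) := by
  field_simp
  ring

set_option maxHeartbeats 2000000 in
/-- **Equation (50): noise decomposition for a stable gene product into cell-cycle-time and
partitioning contributions.** -/
theorem gene_product_noise_stable_limit
    (f : ℝ → ℝ) (hf_cont : Continuous f)
    (hf_pos : ∀ τ : ℝ, 0 < τ → 0 < f τ) (hf_supp : ∀ τ : ℝ, τ ≤ 0 → f τ = 0)
    (hf_prob : ∫ τ in Set.Ioi (0:ℝ), f τ = 1)
    (m₁ : ℝ) (hm₁ : m₁ = ∫ τ in Set.Ioi (0:ℝ), τ * f τ)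
    (hm₁_int : IntegrableOn (fun τ : ℝ => τ * f τ) (Set.Ioi 0))
    (hm₁_pos : 0 < m₁)
    (m₂ : ℝ) (hm₂ : m₂ = ∫ τ in Set.Ioi (0:ℝ), τ ^ 2 * f τ)
    (hm₂_int : IntegrableOn (fun τ : ℝ => τ ^ 2 * f τ) (Set.Ioi 0))
    (m₃ : ℝ) (hm₃ : m₃ = ∫ τ in Set.Ioi (0:ℝ), τ ^ 3 * f τ)
    (hm₃_int : IntegrableOn (fun τ : ℝ => τ ^ 3 * f τ) (Set.Ioi 0))
    (k b : ℝ) (hk : 0 < k) (hb : 0 ≤ b)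
    (φ₁ : ℝ → ℝ) (hφ₁ : ∀ γ : ℝ, φ₁ γ = ∫ τ in Set.Ioi (0:ℝ), f τ * Real.exp (-γ * τ))
    (φ₂ : ℝ → ℝ) (hφ₂ : ∀ γ : ℝ, φ₂ γ = ∫ τ in Set.Ioi (0:ℝ), f τ * Real.exp (-2 * γ * τ))
    (CV2 : ℝ) (hCV2 : CV2 = (m₂ - m₁ ^ 2) / m₁ ^ 2)
    (xbar : ℝ → ℝ)
    (hxbar : ∀ γ : ℝ, xbar γ =
      k / γ - (k / (2 * γ ^ 2 * m₁)) * ((1 - φ₁ γ) / (1 - φ₁ γ / 2)))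
    (x2bar : ℝ → ℝ)
    (hx2bar : ∀ γ : ℝ, x2bar γ =
      (b * k / (2 * γ ^ 2 * m₁)) * ((1 - φ₂ γ) / (1 - φ₂ γ / 4)) *
          ((1 - φ₁ γ) / (1 - φ₁ γ / 2)) +
        k ^ 2 / γ ^ 2 +
        (k ^ 2 / (16 * γ ^ 3 * m₁)) *
          ((-14 + 17 * φ₁ γ + φ₂ γ * (2 - 5 * φ₁ γ)) / ((1 - φ₂ γ / 4) * (1 - φ₁ γ / 2)))) :
    Tendsto (fun γ : ℝ => (x2bar γ - xbar γ ^ 2) / xbar γ ^ 2)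
      (nhdsWithin 0 (Set.Ioi 0))
      (nhds (1 / 27 +
        4 * (9 * m₃ / m₁ ^ 3 - 9 - 6 * CV2 - 7 * CV2 ^ 2) / (27 * (3 + CV2) ^ 2) +
        (16 * b / (3 * (3 + CV2))) * (2 / (k * m₁ * (3 + CV2))))) := by
  have hfnn : ∀ τ : ℝ, 0 < τ → 0 ≤ f τ := fun τ hτ => (hf_pos τ hτ).le
  have hm₂_nonneg : 0 ≤ m₂ := by
    rw [hm₂]
    exact setIntegral_nonneg measurableSet_Ioi fun τ hτ =>
      mul_nonneg (by positivity) (hfnn τ hτ)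
  -- integrability facts
  have hf_int : IntegrableOn f (Set.Ioi (0:ℝ)) := by
    by_contra h
    rw [integral_undef h] at hf_prob
    norm_num at hf_prob
  have hexp_int : ∀ γ : ℝ, 0 < γ →
      IntegrableOn (fun τ => f τ * Real.exp (-γ * τ)) (Set.Ioi (0:ℝ)) := by
    intro γ hγ
    apply hf_int.mono' ((hf_cont.mul (by fun_prop)).aestronglyMeasurable)
    rw [ae_restrict_iff' measurableSet_Ioi]
    refine .of_forall fun τ hτ => ?_
    rw [Set.mem_Ioi] at hτ
    rw [Real.norm_eq_abs, Pi.mul_apply, abs_of_nonneg (mul_nonneg (hfnn τ hτ) (Real.exp_pos _).le)]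
    nlinarith [Real.exp_le_one_iff.2 (by nlinarith : -γ * τ ≤ 0), hfnn τ hτ,
      (Real.exp_pos (-γ * τ)).le]
  -- φ₂ is φ₁ at 2γ
  have hφ21 : ∀ γ : ℝ, φ₂ γ = φ₁ (2*γ) := by
    intro γ
    rw [hφ₂ γ, hφ₁ (2*γ)]
    exact integral_congr_ae (.of_forall fun τ => by ring_nf)
  -- bounds on φ₁
  have hφ1_ub : ∀ γ : ℝ, 0 < γ → φ₁ γ ≤ 1 := by
    intro γ hγ
    rw [hφ₁, ← hf_prob]
    apply setIntegral_mono_on (hexp_int γ hγ) hf_int measurableSet_Ioi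
    intro τ hτ
    rw [Set.mem_Ioi] at hτ
    nlinarith [Real.exp_le_one_iff.2 (by nlinarith : -γ * τ ≤ 0), hfnn τ hτ,
      (Real.exp_pos (-γ * τ)).le]
  -- the remainder function
  obtain ⟨rr, hrr⟩ : ∃ g : ℝ → ℝ, ∀ x : ℝ,
      g x = (φ₁ x - 1 + m₁*x - m₂*x^2/2 + m₃*x^3/6)/x^3 := ⟨_, fun _ => rfl⟩
  have hR : Tendsto rr (nhdsWithin 0 (Set.Ioi 0)) (nhds 0) :=
    (tendsto_rem f hf_cont hf_pos hf_prob m₁ hm₁ hm₁_int m₂ hm₂ hm₂_int m₃ hm₃ hm₃_int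
      φ₁ hφ₁).congr fun x => (hrr x).symm
  have hdouble : Tendsto (fun x : ℝ => 2*x) (nhdsWithin 0 (Set.Ioi 0))
      (nhdsWithin 0 (Set.Ioi 0)) := by
    rw [tendsto_nhdsWithin_iff]
    constructor
    · have hc : Continuous (fun x : ℝ => 2*x) := by continuity
      have := (hc.tendsto (0:ℝ)).mono_left (nhdsWithin_le_nhds (s := Set.Ioi (0:ℝ)))
      simpa using this
    · filter_upwards [eventually_mem_nhdsWithin] with x hx
      rw [Set.mem_Ioi] at hx ⊢
      linarith
  have hR2 : Tendsto (fun x : ℝ => rr (2*x)) (nhdsWithin 0 (Set.Ioi 0)) (nhds 0) := by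
    simpa [Function.comp_def] using hR.comp hdouble
  -- the basic convergence package
  have hΦ : Tendsto (fun x : ℝ => (x, rr x, rr (2*x))) (nhdsWithin 0 (Set.Ioi 0))
      (nhds ((0:ℝ), (0:ℝ), (0:ℝ))) := by
    have hI : Tendsto (fun x : ℝ => x) (nhdsWithin 0 (Set.Ioi 0)) (nhds 0) :=
      tendsto_id.mono_left nhdsWithin_le_nhds
    exact hI.prodMk_nhds (hR.prodMk_nhds hR2)
  -- identities for φ₁ and φ₂ in terms of rr, valid for γ > 0
  have hφ1id : ∀ γ : ℝ, γ ≠ 0 →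
      φ₁ γ = 1 - γ*(m₁ - m₂*γ/2 + m₃*γ^2/6 - γ^2*(rr γ)) := by
    intro γ hne
    rw [hrr γ]
    field_simp
    ring
  have hφ2id : ∀ γ : ℝ, γ ≠ 0 →
      φ₂ γ = 1 - γ*(2*m₁ - 2*m₂*γ + 4*m₃*γ^2/3 - γ^2*(8*rr (2*γ))) := by
    intro γ hne
    rw [hφ21 γ, hrr (2*γ)]
    field_simp
    ring
  -- positivity of the denominators
  have hden1 : ∀ γ : ℝ, 0 < γ →
      0 < 1 + γ*(m₁ - m₂*γ/2 + m₃*γ^2/6 - γ^2*(rr γ)) := by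
    intro γ hγ
    have h1 := hφ1id γ (ne_of_gt hγ)
    have h2 := hφ1_ub γ hγ
    nlinarith
  have hden2 : ∀ γ : ℝ, 0 < γ →
      0 < 3 + γ*(2*m₁ - 2*m₂*γ + 4*m₃*γ^2/3 - γ^2*(8*rr (2*γ))) := by
    intro γ hγ
    have h1 := hφ2id γ (ne_of_gt hγ)
    have h2 : φ₂ γ ≤ 1 := by rw [hφ21 γ]; exact hφ1_ub (2*γ) (by linarith)
    nlinarith
  -- mean: eventual identity
  have heq1 : ∀ γ : ℝ, 0 < γ → xbar γ =
      k*(m₂/2 - m₃*γ/6 + γ*(rr γ) + m₁*(m₁ - m₂*γ/2 + m₃*γ^2/6 - γ^2*(rr γ)))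
        / (m₁*(1 + γ*(m₁ - m₂*γ/2 + m₃*γ^2/6 - γ^2*(rr γ)))) := by
    intro γ hγ
    have hne : γ ≠ 0 := ne_of_gt hγ
    have hd1 := hden1 γ hγ
    have hd1' : (1 + γ*(m₁ - m₂*γ/2 + m₃*γ^2/6 - γ^2*(rr γ))) ≠ 0 := ne_of_gt hd1
    have e1 : 1 - φ₁ γ = γ*(m₁ - m₂*γ/2 + m₃*γ^2/6 - γ^2*(rr γ)) := by
      rw [hφ1id γ hne]; ring
    have e2 : 1 - φ₁ γ/2 = (1 + γ*(m₁ - m₂*γ/2 + m₃*γ^2/6 - γ^2*(rr γ)))/2 := by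
      rw [hφ1id γ hne]; ring
    rw [hxbar γ, e1, e2, rat_id1 k m₁ γ (m₁ - m₂*γ/2 + m₃*γ^2/6 - γ^2*(rr γ)) hne hm₁_pos.ne' hd1']
    have e0 : (m₁ - (m₁ - m₂*γ/2 + m₃*γ^2/6 - γ^2*(rr γ)))/γ + m₁*(m₁ - m₂*γ/2 + m₃*γ^2/6 - γ^2*(rr γ))
        = m₂/2 - m₃*γ/6 + γ*(rr γ) + m₁*(m₁ - m₂*γ/2 + m₃*γ^2/6 - γ^2*(rr γ)) := by
      field_simp
      ring
    rw [e0]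
  -- second moment: eventual identity
  have heq2 : ∀ γ : ℝ, 0 < γ → x2bar γ =
      (8*b*k*((2*m₁ - 2*m₂*γ + 4*m₃*γ^2/3 - γ^2*(8*rr (2*γ)))*(m₁ - m₂*γ/2 + m₃*γ^2/6 - γ^2*(rr γ)))
        + k^2 * (2*m₃ + 8*m₁*m₂ + 4*m₁^3 - 3*(8*rr (2*γ)) + 12*(rr γ)
          - 5*γ*m₂^2 - 14*γ*m₁*m₃/3 - 6*γ*m₁^2*m₂ + 3*γ*(8*rr (2*γ))*m₁ + 4*γ*(rr γ)*m₁
          + 5*γ^2*m₂*m₃ + 2*γ^2*m₁*m₂^2 + 10*γ^2*m₁^2*m₃/3 - 5*γ^2*(8*rr (2*γ))*m₂/2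
          - 2*γ^2*(8*rr (2*γ))*m₁^2 - 10*γ^2*(rr γ)*m₂ - 4*γ^2*(rr γ)*m₁^2
          - 10*γ^3*m₃^2/9 - 2*γ^3*m₁*m₂*m₃ + 5*γ^3*(8*rr (2*γ))*m₃/6
          + γ^3*(8*rr (2*γ))*m₁*m₂ + 20*γ^3*(rr γ)*m₃/3 + 4*γ^3*(rr γ)*m₁*m₂
          - 5*γ^3*(rr γ)*(8*rr (2*γ)) + 4*γ^4*m₁*m₃^2/9 - γ^4*(8*rr (2*γ))*m₁*m₃/3
          - 8*γ^4*(rr γ)*m₁*m₃/3 + 2*γ^4*(rr γ)*(8*rr (2*γ))*m₁))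
        / (2*m₁*((3 + γ*(2*m₁ - 2*m₂*γ + 4*m₃*γ^2/3 - γ^2*(8*rr (2*γ))))
            *(1 + γ*(m₁ - m₂*γ/2 + m₃*γ^2/6 - γ^2*(rr γ))))) := by
    intro γ hγ
    have hne : γ ≠ 0 := ne_of_gt hγ
    have hd1 := hden1 γ hγ
    have hd2 := hden2 γ hγ
    have hd1' : (1 + γ*(m₁ - m₂*γ/2 + m₃*γ^2/6 - γ^2*(rr γ))) ≠ 0 := ne_of_gt hd1
    have hd2' : (3 + γ*(2*m₁ - 2*m₂*γ + 4*m₃*γ^2/3 - γ^2*(8*rr (2*γ)))) ≠ 0 := ne_of_gt hd2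
    have e1 : 1 - φ₁ γ = γ*(m₁ - m₂*γ/2 + m₃*γ^2/6 - γ^2*(rr γ)) := by
      rw [hφ1id γ hne]; ring
    have e2 : 1 - φ₁ γ/2 = (1 + γ*(m₁ - m₂*γ/2 + m₃*γ^2/6 - γ^2*(rr γ)))/2 := by
      rw [hφ1id γ hne]; ring
    have e3 : 1 - φ₂ γ = γ*(2*m₁ - 2*m₂*γ + 4*m₃*γ^2/3 - γ^2*(8*rr (2*γ))) := by
      rw [hφ2id γ hne]; ring
    have e4 : 1 - φ₂ γ/4 = (3 + γ*(2*m₁ - 2*m₂*γ + 4*m₃*γ^2/3 - γ^2*(8*rr (2*γ))))/4 := by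
      rw [hφ2id γ hne]; ring
    rw [hx2bar γ, e1, e2, e3, e4,
      rat_id2 k b m₁ γ (m₁ - m₂*γ/2 + m₃*γ^2/6 - γ^2*(rr γ)) (2*m₁ - 2*m₂*γ + 4*m₃*γ^2/3 - γ^2*(8*rr (2*γ)))
        (-14 + 17 * φ₁ γ + φ₂ γ * (2 - 5 * φ₁ γ)) hne hm₁_pos.ne' hd1' hd2']
    have hQ : (2*γ*m₁*(3 + γ*(2*m₁ - 2*m₂*γ + 4*m₃*γ^2/3 - γ^2*(8*rr (2*γ))))*(1 + γ*(m₁ - m₂*γ/2 + m₃*γ^2/6 - γ^2*(rr γ)))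
          + (-14 + 17 * φ₁ γ + φ₂ γ * (2 - 5 * φ₁ γ)))/γ^3
        = (2*m₃ + 8*m₁*m₂ + 4*m₁^3 - 3*(8*rr (2*γ)) + 12*(rr γ)
          - 5*γ*m₂^2 - 14*γ*m₁*m₃/3 - 6*γ*m₁^2*m₂ + 3*γ*(8*rr (2*γ))*m₁ + 4*γ*(rr γ)*m₁
          + 5*γ^2*m₂*m₃ + 2*γ^2*m₁*m₂^2 + 10*γ^2*m₁^2*m₃/3 - 5*γ^2*(8*rr (2*γ))*m₂/2
          - 2*γ^2*(8*rr (2*γ))*m₁^2 - 10*γ^2*(rr γ)*m₂ - 4*γ^2*(rr γ)*m₁^2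
          - 10*γ^3*m₃^2/9 - 2*γ^3*m₁*m₂*m₃ + 5*γ^3*(8*rr (2*γ))*m₃/6
          + γ^3*(8*rr (2*γ))*m₁*m₂ + 20*γ^3*(rr γ)*m₃/3 + 4*γ^3*(rr γ)*m₁*m₂
          - 5*γ^3*(rr γ)*(8*rr (2*γ)) + 4*γ^4*m₁*m₃^2/9 - γ^4*(8*rr (2*γ))*m₁*m₃/3
          - 8*γ^4*(rr γ)*m₁*m₃/3 + 2*γ^4*(rr γ)*(8*rr (2*γ))*m₁) := by
      rw [hφ1id γ hne, hφ2id γ hne]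
      field_simp
      ring
    rw [hQ]
  -- limit of the mean
  have hxt : Tendsto xbar (nhdsWithin 0 (Set.Ioi 0)) (nhds (k*(m₂/2 + m₁^2)/m₁)) := by
    have hcont : ContinuousAt (fun p : ℝ×ℝ×ℝ =>
        k*(m₂/2 - m₃*p.1/6 + p.1*p.2.1 + m₁*(m₁ - m₂*p.1/2 + m₃*p.1^2/6 - p.1^2*p.2.1))
          / (m₁*(1 + p.1*(m₁ - m₂*p.1/2 + m₃*p.1^2/6 - p.1^2*p.2.1))))
        ((0:ℝ), (0:ℝ), (0:ℝ)) := by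
      apply ContinuousAt.div (by fun_prop) (by fun_prop)
      norm_num [hm₁_pos.ne']
    have h := hcont.tendsto.comp hΦ
    have h2 : Tendsto (fun x : ℝ =>
        k*(m₂/2 - m₃*x/6 + x*(rr x) + m₁*(m₁ - m₂*x/2 + m₃*x^2/6 - x^2*(rr x)))
          / (m₁*(1 + x*(m₁ - m₂*x/2 + m₃*x^2/6 - x^2*(rr x)))))
        (nhdsWithin 0 (Set.Ioi 0)) (nhds (k*(m₂/2 + m₁^2)/m₁)) := by
      convert h using 2
      norm_num
      ring
    refine h2.congr' ?_
    filter_upwards [eventually_mem_nhdsWithin] with γ hγ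
    exact (heq1 γ (Set.mem_Ioi.1 hγ)).symm
  -- limit of the second moment
  have hx2t : Tendsto x2bar (nhdsWithin 0 (Set.Ioi 0))
      (nhds (8*b*k*m₁/3 + k^2*(m₃ + 4*m₁*m₂ + 2*m₁^3)/(3*m₁))) := by
    have hcont : ContinuousAt (fun p : ℝ×ℝ×ℝ =>
        (8*b*k*((2*m₁ - 2*m₂*p.1 + 4*m₃*p.1^2/3 - p.1^2*(8*p.2.2))*(m₁ - m₂*p.1/2 + m₃*p.1^2/6 - p.1^2*(p.2.1)))
        + k^2 * (2*m₃ + 8*m₁*m₂ + 4*m₁^3 - 3*(8*(p.2.2)) + 12*((p.2.1))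
          - 5*p.1*m₂^2 - 14*p.1*m₁*m₃/3 - 6*p.1*m₁^2*m₂ + 3*p.1*(8*(p.2.2))*m₁ + 4*p.1*((p.2.1))*m₁
          + 5*p.1^2*m₂*m₃ + 2*p.1^2*m₁*m₂^2 + 10*p.1^2*m₁^2*m₃/3 - 5*p.1^2*(8*(p.2.2))*m₂/2
          - 2*p.1^2*(8*(p.2.2))*m₁^2 - 10*p.1^2*((p.2.1))*m₂ - 4*p.1^2*((p.2.1))*m₁^2
          - 10*p.1^3*m₃^2/9 - 2*p.1^3*m₁*m₂*m₃ + 5*p.1^3*(8*(p.2.2))*m₃/6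
          + p.1^3*(8*(p.2.2))*m₁*m₂ + 20*p.1^3*((p.2.1))*m₃/3 + 4*p.1^3*((p.2.1))*m₁*m₂
          - 5*p.1^3*((p.2.1))*(8*(p.2.2)) + 4*p.1^4*m₁*m₃^2/9 - p.1^4*(8*(p.2.2))*m₁*m₃/3
          - 8*p.1^4*((p.2.1))*m₁*m₃/3 + 2*p.1^4*((p.2.1))*(8*(p.2.2))*m₁))
        / (2*m₁*((3 + p.1*(2*m₁ - 2*m₂*p.1 + 4*m₃*p.1^2/3 - p.1^2*(8*p.2.2)))
            *(1 + p.1*(m₁ - m₂*p.1/2 + m₃*p.1^2/6 - p.1^2*(p.2.1))))))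
        ((0:ℝ), (0:ℝ), (0:ℝ)) := by
      apply ContinuousAt.div (by fun_prop) (by fun_prop)
      norm_num [hm₁_pos.ne']
    have h := hcont.tendsto.comp hΦ
    have h2 : Tendsto (fun x : ℝ =>
        (8*b*k*((2*m₁ - 2*m₂*x + 4*m₃*x^2/3 - x^2*(8*(rr (2*x))))*(m₁ - m₂*x/2 + m₃*x^2/6 - x^2*((rr x))))
        + k^2 * (2*m₃ + 8*m₁*m₂ + 4*m₁^3 - 3*(8*(rr (2*x))) + 12*((rr x))
          - 5*x*m₂^2 - 14*x*m₁*m₃/3 - 6*x*m₁^2*m₂ + 3*x*(8*(rr (2*x)))*m₁ + 4*x*((rr x))*m₁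
          + 5*x^2*m₂*m₃ + 2*x^2*m₁*m₂^2 + 10*x^2*m₁^2*m₃/3 - 5*x^2*(8*(rr (2*x)))*m₂/2
          - 2*x^2*(8*(rr (2*x)))*m₁^2 - 10*x^2*((rr x))*m₂ - 4*x^2*((rr x))*m₁^2
          - 10*x^3*m₃^2/9 - 2*x^3*m₁*m₂*m₃ + 5*x^3*(8*(rr (2*x)))*m₃/6
          + x^3*(8*(rr (2*x)))*m₁*m₂ + 20*x^3*((rr x))*m₃/3 + 4*x^3*((rr x))*m₁*m₂
          - 5*x^3*((rr x))*(8*(rr (2*x))) + 4*x^4*m₁*m₃^2/9 - x^4*(8*(rr (2*x)))*m₁*m₃/3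
          - 8*x^4*((rr x))*m₁*m₃/3 + 2*x^4*((rr x))*(8*(rr (2*x)))*m₁))
        / (2*m₁*((3 + x*(2*m₁ - 2*m₂*x + 4*m₃*x^2/3 - x^2*(8*(rr (2*x)))))
            *(1 + x*(m₁ - m₂*x/2 + m₃*x^2/6 - x^2*((rr x)))))))
        (nhdsWithin 0 (Set.Ioi 0))
        (nhds (8*b*k*m₁/3 + k^2*(m₃ + 4*m₁*m₂ + 2*m₁^3)/(3*m₁))) := by
      convert h using 2
      norm_num
      field_simp
      ring
    refine h2.congr' ?_
    filter_upwards [eventually_mem_nhdsWithin] with γ hγ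
    exact (heq2 γ (Set.mem_Ioi.1 hγ)).symm
  -- put it together
  have hLpos : 0 < k*(m₂/2 + m₁^2)/m₁ := by positivity
  have hfinal := (hx2t.sub (hxt.pow 2)).div (hxt.pow 2) (by positivity)
  have h1 : m₁ ≠ 0 := hm₁_pos.ne'
  have h2 : k ≠ 0 := hk.ne'
  have h3 : m₂ + 2*m₁^2 ≠ 0 := by positivity
  have hval : 1 / 27 +
        4 * (9 * m₃ / m₁ ^ 3 - 9 - 6 * CV2 - 7 * CV2 ^ 2) / (27 * (3 + CV2) ^ 2) +
        (16 * b / (3 * (3 + CV2))) * (2 / (k * m₁ * (3 + CV2)))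
      = (8*b*k*m₁/3 + k^2*(m₃ + 4*m₁*m₂ + 2*m₁^3)/(3*m₁) - (k*(m₂/2 + m₁^2)/m₁)^2)
          / (k*(m₂/2 + m₁^2)/m₁)^2 := by
    have hc : 3 + CV2 = (m₂ + 2*m₁^2)/m₁^2 := by
      rw [hCV2]
      field_simp
      ring
    rw [hc, hCV2]
    field_simp
    ring
  rw [hval]
  exact hfinal
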